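/- (Corollary 2, LACE for subset selection.) Let Φ be a real n×m matrix with full column rank and let σ > 0 satisfy σ‖v‖₂ ≤ ‖Φv‖₂ for all v ∈ ℝ^m. Let y ∈ ℝ^n be arbitrary, let x* be a minimizer of ‖y − Φz‖₂ over all z ∈ ℝ^m with at most k nonzero entries, let S = supp(x*) (assume |S| = k ≥ 1), and let r = y − Φx*. If (σ/2)·min_{i∈S}|x*_i| > ‖r‖₂, then for every index set A with S ⊆ A ⊆ {1,…,m}, letting x̂^A be the unique minimizer of ‖y − Φz‖₂ over z with supp(z) ⊆ A, one has |x̂^A_j| < |x̂^A_i| for every i ∈ S and every j ∈ A \ S; hence LACE run for m − k steps returns the support S. -/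

import Mathlib

open Matrix

/-- The Euclidean (ℓ₂) norm of a finitely indexed real vector. -/
noncomputable def euclNorm {ι : Type*} [Fintype ι] (v : ι → ℝ) : ℝ :=
  ‖(WithLp.equiv 2 (ι → ℝ)).symm v‖

/-- `z` has at most `k` nonzero entries. -/
def KSparse {m : ℕ} (k : ℕ) (z : Fin m → ℝ) : Prop :=
  ∃ T : Finset (Fin m), T.card ≤ k ∧ ∀ l, z l ≠ 0 → l ∈ T

/-- If `u` has minimal norm among `u - t • p`, then `u ⊥ p`. -/
lemma ortho_of_min {E : Type*} [NormedAddCommGroup E] [InnerProductSpace ℝ E] (u p : E)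
    (h : ∀ t : ℝ, ‖u‖ ≤ ‖u - t • p‖) : inner ℝ u p = (0 : ℝ) := by
  by_contra hc
  have hp : p ≠ 0 := by rintro rfl; simp at hc
  set c : ℝ := inner ℝ u p with hcdef
  have hpn : (0:ℝ) < ‖p‖ ^ 2 := by
    have : 0 < ‖p‖ := norm_pos_iff.mpr hp
    positivity
  set t : ℝ := c / ‖p‖ ^ 2 with htdef
  have ht := h t
  have hsq : ‖u‖ ^ 2 ≤ ‖u - t • p‖ ^ 2 := by
    have := norm_nonneg u
    nlinarith [norm_nonneg (u - t • p)]
  rw [norm_sub_sq_real, real_inner_smul_right, norm_smul] at hsq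
  simp only [Real.norm_eq_abs, mul_pow, sq_abs] at hsq
  have hkey : t * ‖p‖ ^ 2 = c := by
    rw [htdef]; field_simp
  have hc2 : 0 < c ^ 2 := by positivity
  have htc : 0 < t * c := by
    rw [htdef]; rw [div_mul_eq_mul_div]
    exact div_pos (by nlinarith) hpn
  nlinarith [hsq, hkey, htc]

/-- Corollary 2, LACE for subset selection. -/
theorem lace_subset_selection {n m : ℕ}
    (Φ : Matrix (Fin n) (Fin m) ℝ)
    (hΦ : Function.Injective Φ.mulVec)
    (σ : ℝ) (hσ : 0 < σ)
    (hlow : ∀ v : Fin m → ℝ, σ * euclNorm v ≤ euclNorm (Φ.mulVec v))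
    (y : Fin n → ℝ) (k : ℕ) (hk : 1 ≤ k)
    (xstar : Fin m → ℝ)
    (hxstar_sparse : KSparse k xstar)
    (hxstar_min : ∀ z : Fin m → ℝ, KSparse k z →
      euclNorm (y - Φ.mulVec xstar) ≤ euclNorm (y - Φ.mulVec z))
    (S : Finset (Fin m)) (hS : ∀ i, i ∈ S ↔ xstar i ≠ 0)
    (hScard : S.card = k) (hne : S.Nonempty)
    (r : Fin n → ℝ) (hr : r = y - Φ.mulVec xstar)
    (hnoise : σ / 2 * S.inf' hne (fun l => |xstar l|) > euclNorm r) :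
    ∀ A : Finset (Fin m), S ⊆ A →
      ∀ xhatA : Fin m → ℝ,
        (∀ l, xhatA l ≠ 0 → l ∈ A) →
        (∀ z : Fin m → ℝ, (∀ l, z l ≠ 0 → l ∈ A) →
          euclNorm (y - Φ.mulVec xhatA) ≤ euclNorm (y - Φ.mulVec z)) →
        ∀ i ∈ S, ∀ j ∈ A \ S, |xhatA j| < |xhatA i| := by
  intro A hSA xhatA hsupp hmin i hi j hj
  set μ : ℝ := S.inf' hne (fun l => |xstar l|) with hμ
  -- the difference vector
  set v : Fin m → ℝ := xhatA - xstar with hv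
  set rhat : Fin n → ℝ := y - Φ.mulVec xhatA with hrhat
  have hvsupp : ∀ l, v l ≠ 0 → l ∈ A := by
    intro l hl
    by_cases h1 : xhatA l ≠ 0
    · exact hsupp l h1
    · push_neg at h1
      have : xstar l ≠ 0 := by
        simp only [hv, Pi.sub_apply, h1] at hl
        intro h; exact hl (by simp [h])
      exact hSA ((hS l).mpr this)
  -- embed into Euclidean space
  let e : (Fin n → ℝ) → EuclideanSpace ℝ (Fin n) := (WithLp.equiv 2 (Fin n → ℝ)).symm
  let em : (Fin m → ℝ) → EuclideanSpace ℝ (Fin m) := (WithLp.equiv 2 (Fin m → ℝ)).symm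
  -- orthogonality of residual
  have horth : inner ℝ (e rhat) (e (Φ.mulVec v)) = (0:ℝ) := by
    apply ortho_of_min
    intro t
    have hz := hmin (xhatA + t • v) (by
      intro l hl
      by_cases h1 : xhatA l ≠ 0
      · exact hsupp l h1
      · push_neg at h1
        by_cases h2 : v l ≠ 0
        · exact hvsupp l h2
        · push_neg at h2
          exfalso; apply hl; simp [h1, h2]
      )
    have heq : y - Φ.mulVec (xhatA + t • v) = rhat - t • Φ.mulVec v := by
      rw [Matrix.mulVec_add, Matrix.mulVec_smul, hrhat]
      abel
    rw [heq] at hz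
    have : e (rhat - t • Φ.mulVec v) = e rhat - t • e (Φ.mulVec v) := rfl
    calc ‖e rhat‖ = euclNorm rhat := rfl
      _ ≤ euclNorm (rhat - t • Φ.mulVec v) := hz
      _ = ‖e rhat - t • e (Φ.mulVec v)‖ := by rw [euclNorm, ← this]
  -- Pythagoras : ‖Φ v‖ ≤ ‖r‖
  have hrdecomp : e r = e rhat + e (Φ.mulVec v) := by
    have : r = rhat + Φ.mulVec v := by
      rw [hr, hrhat, hv, Matrix.mulVec_sub]; abel
    rw [this]; rfl
  have hpyth : ‖e (Φ.mulVec v)‖ ^ 2 ≤ ‖e r‖ ^ 2 := by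
    rw [hrdecomp, norm_add_sq_real, horth]
    nlinarith [sq_nonneg ‖e rhat‖]
  have hΦv_le : euclNorm (Φ.mulVec v) ≤ euclNorm r := by
    have h1 : euclNorm (Φ.mulVec v) = ‖e (Φ.mulVec v)‖ := rfl
    have h2 : euclNorm r = ‖e r‖ := rfl
    rw [h1, h2]
    nlinarith [norm_nonneg (e (Φ.mulVec v)), norm_nonneg (e r)]
  -- bound on ‖v‖
  have hvbound : σ * euclNorm v ≤ euclNorm r := le_trans (hlow v) hΦv_le
  have hvμ : euclNorm v < μ / 2 := by
    have h1 : σ * euclNorm v < σ / 2 * μ := lt_of_le_of_lt hvbound hnoise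
    nlinarith
  -- coordinatewise bounds
  have hcoord : (v i) ^ 2 + (v j) ^ 2 ≤ (euclNorm v) ^ 2 := by
    have hEnorm : (euclNorm v) ^ 2 = ∑ l, (v l) ^ 2 := by
      rw [euclNorm, EuclideanSpace.norm_eq, Real.sq_sqrt (by positivity)]
      simp [sq_abs]
    rw [hEnorm]
    have hij : i ≠ j := by
      intro h; rw [h] at hi; exact (Finset.mem_sdiff.mp hj).2 hi
    calc (v i)^2 + (v j)^2 = ∑ l ∈ ({i, j} : Finset (Fin m)), (v l)^2 := by
            rw [Finset.sum_pair hij]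
      _ ≤ ∑ l, (v l)^2 := Finset.sum_le_sum_of_subset_of_nonneg
            (Finset.subset_univ _) (fun l _ _ => sq_nonneg _)
  -- μ ≤ |xstar i|
  have hμle : μ ≤ |xstar i| := Finset.inf'_le _ hi
  have hμpos : 0 < μ := by
    have h0 : 0 ≤ euclNorm r := by rw [show euclNorm r = ‖e r‖ from rfl]; exact norm_nonneg _
    nlinarith
  -- xstar j = 0
  have hxj : xstar j = 0 := by
    by_contra h
    exact (Finset.mem_sdiff.mp hj).2 ((hS j).mpr h)
  -- finish
  have hvj : |xhatA j| = |v j| := by rw [hv]; simp [hxj]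
  have hvi : |xstar i| - |v i| ≤ |xhatA i| := by
    have : xhatA i = xstar i + v i := by rw [hv]; simp
    rw [this]
    have h1 : |xstar i| ≤ |xstar i + v i| + |v i| := by
      have := abs_add_le (xstar i + v i) (-(v i))
      simpa using this
    linarith
  have hsum : |v i| + |v j| < μ := by
    have h2 : (v i)^2 + (v j)^2 < μ^2 / 4 := by
      have henn : 0 ≤ euclNorm v := by
        rw [show euclNorm v = ‖em v‖ from rfl]; exact norm_nonneg _
      nlinarith
    nlinarith [abs_nonneg (v i), abs_nonneg (v j), sq_abs (v i), sq_abs (v j),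
      sq_nonneg (|v i| - |v j|), sq_nonneg (|v i| + |v j| - μ)]
  rw [hvj]
  calc |v j| < μ - |v i| := by linarith
    _ ≤ |xstar i| - |v i| := by linarith
    _ ≤ |xhatA i| := hvi
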